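/- Let {E_i}_{i=1}^n be a POVM on ℂ^d and define its measurement strength R = d − (1/d) Σ_{i=1}^n (tr √E_i)². Then 0 ≤ R ≤ d − 1. Moreover, R = 0 if and only if every effect E_i is a nonnegative real scalar multiple of the identity matrix, and R = d − 1 if and only if every effect E_i has matrix rank at most one. -/

import Mathlib

open Matrix BigOperators
open scoped ComplexOrder

namespace Matrix.PosSemidef

/-- The old Mathlib definition of the square root of a positive semidefinite matrix. -/
noncomputable def sqrt {n 𝕜 : Type*} [Fintype n] [RCLike 𝕜] [DecidableEq n]
    {A : Matrix n n 𝕜} (hA : A.PosSemidef) : Matrix n n 𝕜 :=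
  hA.1.eigenvectorUnitary.1 * diagonal ((↑) ∘ Real.sqrt ∘ hA.1.eigenvalues) *
    (star hA.1.eigenvectorUnitary : Matrix n n 𝕜)

open scoped MatrixOrder in
lemma sqrt_eq_cfcSqrt {d : ℕ} {A : Matrix (Fin d) (Fin d) ℂ} (hA : A.PosSemidef) :
    hA.sqrt = CFC.sqrt A := by
  rw [CFC.sqrt_eq_real_sqrt A hA.nonneg, cfcₙ_eq_cfc, Matrix.IsHermitian.cfc_eq hA.1]
  rfl

open scoped MatrixOrder in
lemma posSemidef_sqrt {d : ℕ} {A : Matrix (Fin d) (Fin d) ℂ} (hA : A.PosSemidef) :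
    hA.sqrt.PosSemidef := by
  rw [sqrt_eq_cfcSqrt]
  exact Matrix.nonneg_iff_posSemidef.mp (CFC.sqrt_nonneg A)

open scoped MatrixOrder in
lemma sqrt_mul_self {d : ℕ} {A : Matrix (Fin d) (Fin d) ℂ} (hA : A.PosSemidef) :
    hA.sqrt * hA.sqrt = A := by
  rw [sqrt_eq_cfcSqrt]
  exact CFC.sqrt_mul_sqrt_self A hA.nonneg

open scoped MatrixOrder in
lemma eq_sqrt_of_sq_eq {d : ℕ} {A B : Matrix (Fin d) (Fin d) ℂ} (hB : B.PosSemidef)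
    (hA : A.PosSemidef) (h : B ^ 2 = A) : B = hA.sqrt := by
  rw [sqrt_eq_cfcSqrt]
  exact (CFC.sqrt_unique (by rw [← sq]; exact h) hB.nonneg).symm

end Matrix.PosSemidef

section helpers

variable {d : ℕ}

private lemma myConjTrace (U : Matrix.unitaryGroup (Fin d) ℂ) (f : Fin d → ℂ) :
    ((U : Matrix (Fin d) (Fin d) ℂ) * Matrix.diagonal f *
      star (U : Matrix (Fin d) (Fin d) ℂ)).trace = ∑ j, f j := by
  rw [Matrix.trace_mul_cycle, Matrix.UnitaryGroup.star_mul_self U, Matrix.one_mul,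
    Matrix.trace_diagonal]

private lemma myConjMul (U : Matrix.unitaryGroup (Fin d) ℂ) (A B : Matrix (Fin d) (Fin d) ℂ) :
    ((U : Matrix (Fin d) (Fin d) ℂ) * A * star (U : Matrix (Fin d) (Fin d) ℂ)) *
      ((U : Matrix (Fin d) (Fin d) ℂ) * B * star (U : Matrix (Fin d) (Fin d) ℂ)) =
    (U : Matrix (Fin d) (Fin d) ℂ) * (A * B) * star (U : Matrix (Fin d) (Fin d) ℂ) := by
  have h : star (U : Matrix (Fin d) (Fin d) ℂ) * (U : Matrix (Fin d) (Fin d) ℂ) = 1 :=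
    Matrix.UnitaryGroup.star_mul_self U
  calc ((U : Matrix (Fin d) (Fin d) ℂ) * A * star (U : Matrix (Fin d) (Fin d) ℂ)) *
      ((U : Matrix (Fin d) (Fin d) ℂ) * B * star (U : Matrix (Fin d) (Fin d) ℂ))
      = (U : Matrix (Fin d) (Fin d) ℂ) * A *
        ((star (U : Matrix (Fin d) (Fin d) ℂ) * (U : Matrix (Fin d) (Fin d) ℂ)) *
          (B * star (U : Matrix (Fin d) (Fin d) ℂ))) := by noncomm_ring
    _ = (U : Matrix (Fin d) (Fin d) ℂ) * (A * B) * star (U : Matrix (Fin d) (Fin d) ℂ) := by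
        rw [h, Matrix.one_mul]; noncomm_ring

private lemma herm_trace {S : Matrix (Fin d) (Fin d) ℂ} (hS : S.IsHermitian) :
    S.trace = ((∑ j, hS.eigenvalues j : ℝ) : ℂ) := by
  conv_lhs => rw [hS.spectral_theorem, Unitary.conjStarAlgAut_apply]
  rw [myConjTrace]
  push_cast
  rfl

private lemma herm_trace_sq {S : Matrix (Fin d) (Fin d) ℂ} (hS : S.IsHermitian) :
    (S * S).trace = ((∑ j, (hS.eigenvalues j) ^ 2 : ℝ) : ℂ) := by
  conv_lhs => rw [hS.spectral_theorem, Unitary.conjStarAlgAut_apply]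
  rw [myConjMul, Matrix.diagonal_mul_diagonal, myConjTrace]
  push_cast
  simp [pow_two]

private lemma herm_eq_smul_one {S : Matrix (Fin d) (Fin d) ℂ} (hS : S.IsHermitian) (c : ℝ)
    (h : ∀ j, hS.eigenvalues j = c) : S = (c : ℂ) • 1 := by
  have hf : (RCLike.ofReal ∘ hS.eigenvalues : Fin d → ℂ) = fun _ => (c : ℂ) :=
    funext fun j => by simp [h j]
  have hD : Matrix.diagonal (RCLike.ofReal ∘ hS.eigenvalues : Fin d → ℂ) = (c : ℂ) • 1 := by
    rw [Matrix.smul_one_eq_diagonal, hf]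
  have hUU : (hS.eigenvectorUnitary : Matrix (Fin d) (Fin d) ℂ) *
      star (hS.eigenvectorUnitary : Matrix (Fin d) (Fin d) ℂ) = 1 :=
    Matrix.mem_unitaryGroup_iff.mp hS.eigenvectorUnitary.2
  conv_lhs => rw [hS.spectral_theorem, Unitary.conjStarAlgAut_apply]
  rw [hD, Matrix.mul_smul, Matrix.smul_mul, Matrix.mul_one, hUU]

private lemma psd_smul_one (c : ℝ) (hc : 0 ≤ c) :
    ((c : ℂ) • (1 : Matrix (Fin d) (Fin d) ℂ)).PosSemidef := by
  exact Matrix.PosSemidef.one.smul (Complex.zero_le_real.mpr hc)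

private lemma sq_sum_expand (f : Fin d → ℝ) :
    (∑ j, f j) ^ 2 = ∑ j, (f j) ^ 2 + ∑ j, ∑ k ∈ Finset.univ.erase j, f j * f k := by
  rw [sq, Finset.sum_mul_sum]
  rw [← Finset.sum_add_distrib]
  refine Finset.sum_congr rfl fun j _ => ?_
  rw [← Finset.add_sum_erase _ _ (Finset.mem_univ j), sq]

private lemma cs_expand (f : Fin d → ℝ) :
    ∑ j, ∑ k, (f j - f k) ^ 2 = 2 * d * (∑ j, (f j) ^ 2) - 2 * (∑ j, f j) ^ 2 := by
  simp only [sub_sq, Finset.sum_add_distrib, Finset.sum_sub_distrib, Finset.sum_const,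
    Finset.card_univ, Fintype.card_fin, nsmul_eq_mul, ← Finset.mul_sum, ← Finset.sum_mul]
  ring

end helpers

/-- For a POVM `{E_i}` on `ℂ^d`, the measurement strength
`R = d − (1/d) Σ_i (tr √E_i)²` satisfies `0 ≤ R ≤ d − 1`; `R = 0` iff every effect is a
nonnegative real multiple of the identity, and `R = d − 1` iff every effect has rank at most
one. -/
theorem measurement_strength_bounds
    (d n : ℕ) (hd : 1 ≤ d) (E : Fin n → Matrix (Fin d) (Fin d) ℂ)
    (hE : ∀ i, (E i).PosSemidef)
    (hsum : ∑ i, E i = 1)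
    (R : ℝ)
    (hR : R = (d : ℝ) - (1 / (d : ℝ)) * ∑ i, (((hE i).sqrt).trace.re) ^ 2) :
    (0 ≤ R ∧ R ≤ (d : ℝ) - 1)
    ∧ (R = 0 ↔ ∀ i, ∃ c : ℝ, 0 ≤ c ∧ E i = (c : ℂ) • (1 : Matrix (Fin d) (Fin d) ℂ))
    ∧ (R = (d : ℝ) - 1 ↔ ∀ i, (E i).rank ≤ 1) := by
  classical
  have hdR : (0:ℝ) < d := by exact_mod_cast hd
  set μ : Fin n → Fin d → ℝ := fun i => ((hE i).posSemidef_sqrt).1.eigenvalues with hμdef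
  set t : Fin n → ℝ := fun i => ((hE i).sqrt).trace.re with htdef
  set e : Fin n → ℝ := fun i => ∑ j, (μ i j) ^ 2 with hedef
  have hμ0 : ∀ i j, 0 ≤ μ i j := fun i j => ((hE i).posSemidef_sqrt).eigenvalues_nonneg j
  have ht : ∀ i, t i = ∑ j, μ i j := by
    intro i
    show (((hE i).sqrt).trace).re = _
    rw [herm_trace ((hE i).posSemidef_sqrt).1]
    exact Complex.ofReal_re _
  have he_tr : ∀ i, (E i).trace = ((e i : ℝ) : ℂ) := by
    intro i
    conv_lhs => rw [← (hE i).sqrt_mul_self]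
    exact herm_trace_sq ((hE i).posSemidef_sqrt).1
  have hsume : ∑ i, e i = (d : ℝ) := by
    have h1 : ∑ i, (E i).trace = (d : ℂ) := by
      rw [← Matrix.trace_sum, hsum, Matrix.trace_one]
      simp
    rw [Finset.sum_congr rfl (fun i _ => he_tr i)] at h1
    exact_mod_cast h1
  -- basic per-i inequalities
  have hte : ∀ i, e i ≤ (t i) ^ 2 := by
    intro i
    rw [ht i, sq_sum_expand (μ i)]
    have : 0 ≤ ∑ j, ∑ k ∈ Finset.univ.erase j, μ i j * μ i k :=
      Finset.sum_nonneg fun j _ => Finset.sum_nonneg fun k _ =>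
        mul_nonneg (hμ0 i j) (hμ0 i k)
    linarith
  have htd : ∀ i, (t i) ^ 2 ≤ (d : ℝ) * e i := by
    intro i
    have h1 : 0 ≤ ∑ j, ∑ k, (μ i j - μ i k) ^ 2 :=
      Finset.sum_nonneg fun j _ => Finset.sum_nonneg fun k _ => sq_nonneg _
    rw [cs_expand (μ i)] at h1
    rw [ht i]
    linarith
  -- rank characterization
  have hrkE : ∀ i, (E i).rank = Fintype.card {j // μ i j ≠ 0} := by
    intro i
    have h1 : E i = ((hE i).sqrt)ᴴ * (hE i).sqrt := by
      conv_rhs => rw [((hE i).posSemidef_sqrt).1]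
      exact ((hE i).sqrt_mul_self).symm
    rw [h1, Matrix.rank_conjTranspose_mul_self]
    exact ((hE i).posSemidef_sqrt).1.rank_eq_card_non_zero_eigs
  have hrank_iff : ∀ i, ((t i) ^ 2 = e i ↔ (E i).rank ≤ 1) := by
    intro i
    constructor
    · intro h
      have hcross : ∑ j, ∑ k ∈ Finset.univ.erase j, μ i j * μ i k = 0 := by
        rw [ht i, sq_sum_expand (μ i)] at h
        linarith
      have hz : ∀ j ∈ Finset.univ, ∑ k ∈ Finset.univ.erase j, μ i j * μ i k = 0 :=
        (Finset.sum_eq_zero_iff_of_nonneg (fun j _ =>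
          Finset.sum_nonneg fun k _ => mul_nonneg (hμ0 i j) (hμ0 i k))).1 hcross
      have hz2 : ∀ j k, j ≠ k → μ i j * μ i k = 0 := by
        intro j k hjk
        exact (Finset.sum_eq_zero_iff_of_nonneg (fun k _ =>
          mul_nonneg (hμ0 i j) (hμ0 i k))).1 (hz j (Finset.mem_univ j)) k
          (Finset.mem_erase.2 ⟨hjk.symm, Finset.mem_univ k⟩)
      rw [hrkE i]
      refine Fintype.card_le_one_iff.2 fun a b => ?_
      by_contra hne
      have hab : (a : Fin d) ≠ (b : Fin d) := fun hh => hne (Subtype.ext hh)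
      exact (mul_ne_zero a.2 b.2) (hz2 a b hab)
    · intro h
      rw [hrkE i] at h
      have hz2 : ∀ j k, j ≠ k → μ i j * μ i k = 0 := by
        intro j k hjk
        by_contra hne
        have hj : μ i j ≠ 0 := left_ne_zero_of_mul hne
        have hk : μ i k ≠ 0 := right_ne_zero_of_mul hne
        have : 1 < Fintype.card {j // μ i j ≠ 0} :=
          Fintype.one_lt_card_iff.2 ⟨⟨j, hj⟩, ⟨k, hk⟩, fun hh => hjk (congrArg Subtype.val hh)⟩
        omega
      rw [ht i, sq_sum_expand (μ i)]
      have : ∑ j, ∑ k ∈ Finset.univ.erase j, μ i j * μ i k = 0 :=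
        Finset.sum_eq_zero fun j _ => Finset.sum_eq_zero fun k hk =>
          hz2 j k (Finset.mem_erase.1 hk).1.symm
      rw [this, add_zero]
  -- scalar characterization
  have hscal_iff : ∀ i, ((t i) ^ 2 = (d : ℝ) * e i ↔
      ∃ c : ℝ, 0 ≤ c ∧ E i = (c : ℂ) • (1 : Matrix (Fin d) (Fin d) ℂ)) := by
    intro i
    constructor
    · intro h
      have hcs : ∑ j, ∑ k, (μ i j - μ i k) ^ 2 = 0 := by
        rw [cs_expand (μ i)]
        rw [ht i] at h
        linarith
      have heq : ∀ j k : Fin d, μ i j = μ i k := by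
        intro j k
        have h1 : ∀ j ∈ Finset.univ, ∑ k, (μ i j - μ i k) ^ 2 = 0 :=
          (Finset.sum_eq_zero_iff_of_nonneg (fun j _ =>
            Finset.sum_nonneg fun k _ => sq_nonneg _)).1 hcs
        have h2 : (μ i j - μ i k) ^ 2 = 0 :=
          (Finset.sum_eq_zero_iff_of_nonneg (fun k _ => sq_nonneg _)).1
            (h1 j (Finset.mem_univ j)) k (Finset.mem_univ k)
        have := pow_eq_zero_iff (n := 2) (by norm_num) |>.1 h2
        linarith [sub_eq_zero.1 this]
      set j0 : Fin d := ⟨0, hd⟩ with hj0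
      set m : ℝ := μ i j0 with hm
      have hSm : (hE i).sqrt = (m : ℂ) • 1 :=
        herm_eq_smul_one ((hE i).posSemidef_sqrt).1 m (fun j => heq j j0)
      refine ⟨m ^ 2, sq_nonneg m, ?_⟩
      rw [← (hE i).sqrt_mul_self, hSm, Matrix.smul_mul, Matrix.mul_smul, Matrix.one_mul,
        smul_smul]
      congr 1
      push_cast
      ring
    · rintro ⟨c, hc, hEc⟩
      have hB : ((Real.sqrt c : ℂ) • (1 : Matrix (Fin d) (Fin d) ℂ)).PosSemidef :=
        psd_smul_one _ (Real.sqrt_nonneg c)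
      have hB2 : ((Real.sqrt c : ℂ) • (1 : Matrix (Fin d) (Fin d) ℂ)) ^ 2 = E i := by
        rw [pow_two, Matrix.smul_mul, Matrix.mul_smul, Matrix.one_mul, smul_smul, hEc]
        congr 1
        rw [← Complex.ofReal_mul, Real.mul_self_sqrt hc]
      have hsq : ((Real.sqrt c : ℂ) • (1 : Matrix (Fin d) (Fin d) ℂ)) = (hE i).sqrt :=
        hB.eq_sqrt_of_sq_eq (hE i) hB2
      have htval : t i = Real.sqrt c * d := by
        show (((hE i).sqrt).trace).re = _
        rw [← hsq, Matrix.trace_smul, Matrix.trace_one]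
        simp
      have heval : e i = c * d := by
        have h1 : ((e i : ℝ) : ℂ) = ((c * d : ℝ) : ℂ) := by
          rw [← he_tr i, hEc, Matrix.trace_smul, Matrix.trace_one, smul_eq_mul, Fintype.card_fin]
          push_cast
          ring
        exact_mod_cast h1
      rw [htval, heval, mul_pow, Real.sq_sqrt hc]
      ring
  -- global sum facts
  have hT_ub : ∑ i, (t i) ^ 2 ≤ (d : ℝ) * d := by
    calc ∑ i, (t i) ^ 2 ≤ ∑ i, (d : ℝ) * e i := Finset.sum_le_sum fun i _ => htd i
      _ = (d : ℝ) * ∑ i, e i := by rw [Finset.mul_sum]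
      _ = (d : ℝ) * d := by rw [hsume]
  have hT_lb : (d : ℝ) ≤ ∑ i, (t i) ^ 2 := by
    calc (d : ℝ) = ∑ i, e i := hsume.symm
      _ ≤ ∑ i, (t i) ^ 2 := Finset.sum_le_sum fun i _ => hte i
  have hRsum : R = (d : ℝ) - (1 / (d : ℝ)) * ∑ i, (t i) ^ 2 := hR
  refine ⟨⟨?_, ?_⟩, ?_, ?_⟩
  · -- 0 ≤ R
    rw [hRsum]
    have h1 : (1 / (d : ℝ)) * ∑ i, (t i) ^ 2 ≤ (1 / (d : ℝ)) * ((d : ℝ) * d) :=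
      mul_le_mul_of_nonneg_left hT_ub (by positivity)
    have h2 : (1 / (d : ℝ)) * ((d : ℝ) * d) = d := by field_simp
    linarith
  · -- R ≤ d - 1
    rw [hRsum]
    have h1 : (1 / (d : ℝ)) * (d : ℝ) ≤ (1 / (d : ℝ)) * ∑ i, (t i) ^ 2 :=
      mul_le_mul_of_nonneg_left hT_lb (by positivity)
    have h2 : (1 / (d : ℝ)) * (d : ℝ) = 1 := by field_simp
    linarith
  · -- R = 0 ↔ scalar
    rw [hRsum, sub_eq_zero, one_div_mul_eq_div, eq_comm, div_eq_iff hdR.ne']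
    have hiff : (∑ i, (t i) ^ 2 = ∑ i, (d : ℝ) * e i) ↔ ∀ i ∈ Finset.univ, (t i) ^ 2 = (d:ℝ) * e i :=
      Finset.sum_eq_sum_iff_of_le fun i _ => htd i
    have hsum2 : ∑ i, (d : ℝ) * e i = (d : ℝ) * d := by
      rw [← Finset.mul_sum, hsume]
    constructor
    · intro h
      intro i
      exact (hscal_iff i).1 ((hiff.1 (by rw [hsum2]; exact h)) i (Finset.mem_univ i))
    · intro h
      rw [← hsum2]
      exact hiff.2 fun i _ => (hscal_iff i).2 (h i)
  · -- R = d - 1 ↔ rank ≤ 1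
    rw [hRsum, sub_right_inj, one_div_mul_eq_div, div_eq_one_iff_eq hdR.ne']
    have hiff : (∑ i, e i = ∑ i, (t i) ^ 2) ↔ ∀ i ∈ Finset.univ, e i = (t i) ^ 2 :=
      Finset.sum_eq_sum_iff_of_le fun i _ => hte i
    constructor
    · intro h
      intro i
      exact (hrank_iff i).1 ((hiff.1 (by rw [hsume]; exact h.symm)) i (Finset.mem_univ i)).symm
    · intro h
      rw [← hsume]
      exact (hiff.2 fun i _ => ((hrank_iff i).2 (h i)).symm).symm
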